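/- arXiv:1512.02106 — 3 statements merged into one kernel-verified Lean document; each statement's English description precedes it below -/
import Mathlib

section
/- Let A be an associative algebra over ℂ and let S be a set of elements of A such that for all a, b, c ∈ S one has a·b·c = j·(b·c·a), where j = exp(2πi/3). Then for all a, b, c, d ∈ S the quartic product vanishes: a·b·c·d = 0. -/
/-- The primitive cube root of unity `j = exp(2πi/3)`. -/
noncomputable def jRoot : ℂ := Complex.exp (2 * Real.pi * Complex.I / 3)

lemma jRoot_cube : jRoot ^ 3 = 1 := by
  unfold jRoot
  rw [← Complex.exp_nat_mul]
  have : ((3:ℕ) : ℂ) * (2 * Real.pi * Complex.I / 3) = 2 * Real.pi * Complex.I := by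
    push_cast; ring
  rw [this]
  simpa [mul_comm] using Complex.exp_two_pi_mul_I

lemma jRoot_ne_one : jRoot ≠ 1 := by
  intro heq
  unfold jRoot at heq
  rw [Complex.exp_eq_one_iff] at heq
  obtain ⟨n, hn⟩ := heq
  have hπ : (Real.pi : ℂ) ≠ 0 := by exact_mod_cast Real.pi_ne_zero
  have h2 : (2 : ℂ) * Real.pi * Complex.I ≠ 0 := by
    simp [hπ, Complex.I_ne_zero]
  have h3 : ((3 * n : ℤ) : ℂ) = 1 := by
    push_cast
    have : (2 * Real.pi * Complex.I) * 1 = (2 * Real.pi * Complex.I) * (3 * n) := by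
      rw [mul_one]
      field_simp at hn
      linear_combination (2 * (Real.pi : ℂ) * Complex.I) * hn
    exact ((mul_left_cancel₀ h2 this)).symm
  have : (3 * n : ℤ) = 1 := by exact_mod_cast h3
  omega

/-- In an associative ℂ-algebra, if a set `S` of elements satisfies the cubic
relations `a·b·c = j·(b·c·a)` for all `a, b, c ∈ S`, then every quartic product
of elements of `S` vanishes. -/
theorem quartic_products_vanish {A : Type*} [Ring A] [Algebra ℂ A] (S : Set A)
    (h : ∀ a ∈ S, ∀ b ∈ S, ∀ c ∈ S, a * b * c = jRoot • (b * c * a)) :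
    ∀ a ∈ S, ∀ b ∈ S, ∀ c ∈ S, ∀ d ∈ S, a * b * c * d = 0 := by
  -- rotation by two: a*b*c*d = j^2 • (c*d*a*b)
  have rot2 : ∀ a ∈ S, ∀ b ∈ S, ∀ c ∈ S, ∀ d ∈ S,
      a * b * c * d = (jRoot ^ 2) • (c * d * a * b) := by
    intro a ha b hb c hc d hd
    have h1 : b * c * d = jRoot • (c * d * b) := h b hb c hc d hd
    have h2 : a * c * d = jRoot • (c * d * a) := h a ha c hc d hd
    calc a * b * c * d = a * (b * c * d) := by noncomm_ring
      _ = jRoot • (a * (c * d * b)) := by rw [h1, mul_smul_comm]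
      _ = jRoot • (a * c * d * b) := by congr 1; noncomm_ring
      _ = jRoot • (jRoot • (c * d * a) * b) := by rw [h2]
      _ = (jRoot ^ 2) • (c * d * a * b) := by
          rw [smul_mul_assoc, smul_smul, sq]
  intro a ha b hb c hc d hd
  have e1 := rot2 a ha b hb c hc d hd
  have e2 := rot2 c hc d hd a ha b hb
  rw [e2, smul_smul] at e1
  have h4 : jRoot ^ 2 * jRoot ^ 2 = jRoot := by
    linear_combination jRoot * jRoot_cube
  rw [h4] at e1
  have e3 : ((1 : ℂ) - jRoot) • (a * b * c * d) = 0 := by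
    rw [sub_smul, one_smul, ← e1, sub_self]
  have hj : (1 : ℂ) - jRoot ≠ 0 := sub_ne_zero.mpr (Ne.symm jRoot_ne_one)
  rcases smul_eq_zero.mp e3 with h0 | h0
  · exact absurd h0 hj
  · exact h0
end

section
/- Let j = exp(2πi/3) and define ρ : Fin 2 → (Fin 2 × Fin 2 × Fin 2) → ℂ by its nonzero components ρ¹₍₁₂₁₎ = 1, ρ¹₍₂₁₁₎ = j², ρ¹₍₁₁₂₎ = j, ρ²₍₂₁₂₎ = 1, ρ²₍₁₂₂₎ = j², ρ²₍₂₂₁₎ = j, all other components being zero. If S, U ∈ M₂(ℂ) satisfy the covariance condition: for all α' and all A, B, C, Σ_β S^{α'}_β · ρ^β_{ABC} = Σ_{A',B',C'} U^{A'}_A · U^{B'}_B · U^{C'}_C · ρ^{α'}_{A'B'C'}, then det S = (det U)³. -/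
open BigOperators Matrix

/-- The `j`-skew-invariant trilinear forms `ρ^α_{ABC}` on two generators
(indices 1,2 rendered as `0,1 : Fin 2`), with nonzero components
`ρ¹₍₁₂₁₎ = 1`, `ρ¹₍₂₁₁₎ = j²`, `ρ¹₍₁₁₂₎ = j`,
`ρ²₍₂₁₂₎ = 1`, `ρ²₍₁₂₂₎ = j²`, `ρ²₍₂₂₁₎ = j`. -/
noncomputable def ρform : Fin 2 → Fin 2 → Fin 2 → Fin 2 → ℂ := fun α A B C =>
  if (α, A, B, C) = (0, 0, 1, 0) then 1
  else if (α, A, B, C) = (0, 1, 0, 0) then jRoot ^ 2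
  else if (α, A, B, C) = (0, 0, 0, 1) then jRoot
  else if (α, A, B, C) = (1, 1, 0, 1) then 1
  else if (α, A, B, C) = (1, 0, 1, 1) then jRoot ^ 2
  else if (α, A, B, C) = (1, 1, 1, 0) then jRoot
  else 0

/-- The covariance condition for simultaneous change of basis by `S` (on the
`Z₂`-graded generators) and `U` (on the `Z₃`-graded generators). -/
def RhoCovariant (S U : Matrix (Fin 2) (Fin 2) ℂ) : Prop :=
  ∀ α' A B C, ∑ β, S α' β * ρform β A B C =
    ∑ A', ∑ B', ∑ C', U A' A * U B' B * U C' C * ρform α' A' B' C'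

/-- If `S` and `U` satisfy the covariance condition for the `ρ`-forms, then
`det S = (det U)³`. -/
theorem covariance_det (S U : Matrix (Fin 2) (Fin 2) ℂ) (h : RhoCovariant S U) :
    S.det = U.det ^ 3 := by
  have hprim : IsPrimitiveRoot jRoot 3 := by
    have := Complex.isPrimitiveRoot_exp 3 (by norm_num)
    simpa [jRoot] using this
  have h3 : jRoot ^ 3 = 1 := hprim.pow_eq_one
  have hne : jRoot ≠ 1 := hprim.ne_one (by norm_num)
  have hj : jRoot ^ 2 + jRoot + 1 = 0 := by
    have hf : (jRoot - 1) * (jRoot ^ 2 + jRoot + 1) = 0 := by linear_combination h3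
    rcases mul_eq_zero.mp hf with h' | h'
    · exact absurd (sub_eq_zero.mp h') hne
    · exact h'
  have h0 := h 0 0 1 0
  have h1 := h 0 1 0 1
  have h2 := h 1 0 1 0
  have h4 := h 1 1 0 1
  simp [ρform, Fin.sum_univ_two] at h0 h1 h2 h4
  rw [Matrix.det_fin_two S, Matrix.det_fin_two U]
  linear_combination (S 1 1) * h0 - (S 1 0) * h1 -
      (U 0 1 * U 0 1 * U 1 0 + (jRoot ^ 2 + jRoot) * U 0 0 * U 0 1 * U 1 1) * h2 +
      (U 0 0 * U 0 0 * U 1 1 + (jRoot ^ 2 + jRoot) * U 0 0 * U 0 1 * U 1 0) * h4 +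
      (U 0 0 * U 0 1 * U 1 0 * U 1 1 * (U 0 0 * U 1 1 - U 0 1 * U 1 0) *
        (4 - (jRoot ^ 2 + jRoot + 1))) * hj
end

section
/- Let σ⁰ = [[1,0],[0,1]], σ¹ = [[0,1],[1,0]], σ² = [[0,−i],[i,0]], σ³ = [[1,0],[0,−1]] be the identity and the three Pauli matrices in M₂(ℂ). Suppose U ∈ M₂(ℂ) and Λ is a 4×4 complex matrix (indices μ, ν ∈ {0,1,2,3}) satisfying, for all μ and all A, B ∈ {1,2}: Σ_ν Λ^{μ}_ν · σ^ν_{AB} = Σ_{A',B'} U^{A'}_A · conj(U^{B'}_B) · σ^{μ}_{A'B'}. Then det Λ = (det U)² · (conj(det U))². -/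
open BigOperators Matrix

/-- The identity matrix and the three Pauli matrices
(indices `0,1,2,3 : Fin 4`). -/
noncomputable def pauli : Fin 4 → Matrix (Fin 2) (Fin 2) ℂ
  | 0 => !![1, 0; 0, 1]
  | 1 => !![0, 1; 1, 0]
  | 2 => !![0, -Complex.I; Complex.I, 0]
  | 3 => !![1, 0; 0, -1]

set_option maxHeartbeats 1000000 in
lemma detFour' (M : Matrix (Fin 4) (Fin 4) ℂ) : M.det =
    M 0 0 * (M 1 1 * (M 2 2 * M 3 3 - M 2 3 * M 3 2) - M 1 2 * (M 2 1 * M 3 3 - M 2 3 * M 3 1) + M 1 3 * (M 2 1 * M 3 2 - M 2 2 * M 3 1))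
  - M 0 1 * (M 1 0 * (M 2 2 * M 3 3 - M 2 3 * M 3 2) - M 1 2 * (M 2 0 * M 3 3 - M 2 3 * M 3 0) + M 1 3 * (M 2 0 * M 3 2 - M 2 2 * M 3 0))
  + M 0 2 * (M 1 0 * (M 2 1 * M 3 3 - M 2 3 * M 3 1) - M 1 1 * (M 2 0 * M 3 3 - M 2 3 * M 3 0) + M 1 3 * (M 2 0 * M 3 1 - M 2 1 * M 3 0))
  - M 0 3 * (M 1 0 * (M 2 1 * M 3 2 - M 2 2 * M 3 1) - M 1 1 * (M 2 0 * M 3 2 - M 2 2 * M 3 0) + M 1 2 * (M 2 0 * M 3 1 - M 2 1 * M 3 0)) := by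
  have hM : M = Matrix.of ![![M 0 0, M 0 1, M 0 2, M 0 3], ![M 1 0, M 1 1, M 1 2, M 1 3],
      ![M 2 0, M 2 1, M 2 2, M 2 3], ![M 3 0, M 3 1, M 3 2, M 3 3]] := by
    ext i j; fin_cases i <;> fin_cases j <;> rfl
  rw [hM]
  simp [Matrix.det_succ_row_zero, Fin.sum_univ_succ, Fin.succAbove,
    show ((2:Fin 3).castSucc : Fin 4) = 2 from rfl]
  ring

set_option maxHeartbeats 2000000 in
/-- If the 4×4 matrix `Λ` represents on the four matrices `σ^μ` the
transformation of the lower spinor indices by `U` and its complex conjugate,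
i.e. `Σ_ν Λ^μ_ν σ^ν_{AB} = Σ_{A',B'} U^{A'}_A · conj(U^{B'}_B) · σ^μ_{A'B'}`,
then `det Λ = (det U)²·(conj(det U))²`. -/
theorem lorentz_det (U : Matrix (Fin 2) (Fin 2) ℂ)
    (Λ : Matrix (Fin 4) (Fin 4) ℂ)
    (h : ∀ μ A B, ∑ ν, Λ μ ν * pauli ν A B =
      ∑ A', ∑ B', U A' A * (starRingEnd ℂ) (U B' B) * pauli μ A' B') :
    Λ.det = U.det ^ 2 * ((starRingEnd ℂ) U.det) ^ 2 := by
  have h000 := h 0 0 0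
  have h001 := h 0 0 1
  have h010 := h 0 1 0
  have h011 := h 0 1 1
  have h100 := h 1 0 0
  have h101 := h 1 0 1
  have h110 := h 1 1 0
  have h111 := h 1 1 1
  have h200 := h 2 0 0
  have h201 := h 2 0 1
  have h210 := h 2 1 0
  have h211 := h 2 1 1
  have h300 := h 3 0 0
  have h301 := h 3 0 1
  have h310 := h 3 1 0
  have h311 := h 3 1 1
  simp [pauli, Fin.sum_univ_four, Fin.sum_univ_two] at h000 h001 h010 h011 h100 h101 h110 h111 h200 h201 h210 h211 h300 h301 h310 h311
  have e00 : Λ 0 0 = ((U 0 0) * ((starRingEnd ℂ) (U 0 0)) * 1 + (U 1 0) * ((starRingEnd ℂ) (U 1 0)) * 1 + ((U 0 1) * ((starRingEnd ℂ) (U 0 1)) * 1 + (U 1 1) * ((starRingEnd ℂ) (U 1 1)) * 1))/2 := by linear_combination (h000 + h011)/2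
  have e01 : Λ 0 1 = ((U 0 0) * ((starRingEnd ℂ) (U 0 1)) * 1 + (U 1 0) * ((starRingEnd ℂ) (U 1 1)) * 1 + ((U 0 1) * ((starRingEnd ℂ) (U 0 0)) * 1 + (U 1 1) * ((starRingEnd ℂ) (U 1 0)) * 1))/2 := by linear_combination (h001 + h010)/2
  have e02 : Λ 0 2 = Complex.I * (((U 0 0) * ((starRingEnd ℂ) (U 0 1)) * 1 + (U 1 0) * ((starRingEnd ℂ) (U 1 1)) * 1) - ((U 0 1) * ((starRingEnd ℂ) (U 0 0)) * 1 + (U 1 1) * ((starRingEnd ℂ) (U 1 0)) * 1))/2 := by linear_combination Complex.I * (h001 - h010)/2 + Λ 0 2 * Complex.I_sq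
  have e03 : Λ 0 3 = ((U 0 0) * ((starRingEnd ℂ) (U 0 0)) * 1 + (U 1 0) * ((starRingEnd ℂ) (U 1 0)) * 1 - ((U 0 1) * ((starRingEnd ℂ) (U 0 1)) * 1 + (U 1 1) * ((starRingEnd ℂ) (U 1 1)) * 1))/2 := by linear_combination (h000 - h011)/2
  have e10 : Λ 1 0 = ((U 0 0) * ((starRingEnd ℂ) (U 1 0)) * 1 + (U 1 0) * ((starRingEnd ℂ) (U 0 0)) * 1 + ((U 0 1) * ((starRingEnd ℂ) (U 1 1)) * 1 + (U 1 1) * ((starRingEnd ℂ) (U 0 1)) * 1))/2 := by linear_combination (h100 + h111)/2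
  have e11 : Λ 1 1 = ((U 0 0) * ((starRingEnd ℂ) (U 1 1)) * 1 + (U 1 0) * ((starRingEnd ℂ) (U 0 1)) * 1 + ((U 0 1) * ((starRingEnd ℂ) (U 1 0)) * 1 + (U 1 1) * ((starRingEnd ℂ) (U 0 0)) * 1))/2 := by linear_combination (h101 + h110)/2
  have e12 : Λ 1 2 = Complex.I * (((U 0 0) * ((starRingEnd ℂ) (U 1 1)) * 1 + (U 1 0) * ((starRingEnd ℂ) (U 0 1)) * 1) - ((U 0 1) * ((starRingEnd ℂ) (U 1 0)) * 1 + (U 1 1) * ((starRingEnd ℂ) (U 0 0)) * 1))/2 := by linear_combination Complex.I * (h101 - h110)/2 + Λ 1 2 * Complex.I_sq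
  have e13 : Λ 1 3 = ((U 0 0) * ((starRingEnd ℂ) (U 1 0)) * 1 + (U 1 0) * ((starRingEnd ℂ) (U 0 0)) * 1 - ((U 0 1) * ((starRingEnd ℂ) (U 1 1)) * 1 + (U 1 1) * ((starRingEnd ℂ) (U 0 1)) * 1))/2 := by linear_combination (h100 - h111)/2
  have e20 : Λ 2 0 = ((U 0 0) * ((starRingEnd ℂ) (U 1 0)) * (-Complex.I) + (U 1 0) * ((starRingEnd ℂ) (U 0 0)) * Complex.I + ((U 0 1) * ((starRingEnd ℂ) (U 1 1)) * (-Complex.I) + (U 1 1) * ((starRingEnd ℂ) (U 0 1)) * Complex.I))/2 := by linear_combination (h200 + h211)/2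
  have e21 : Λ 2 1 = ((U 0 0) * ((starRingEnd ℂ) (U 1 1)) * (-Complex.I) + (U 1 0) * ((starRingEnd ℂ) (U 0 1)) * Complex.I + ((U 0 1) * ((starRingEnd ℂ) (U 1 0)) * (-Complex.I) + (U 1 1) * ((starRingEnd ℂ) (U 0 0)) * Complex.I))/2 := by linear_combination (h201 + h210)/2
  have e22 : Λ 2 2 = Complex.I * (((U 0 0) * ((starRingEnd ℂ) (U 1 1)) * (-Complex.I) + (U 1 0) * ((starRingEnd ℂ) (U 0 1)) * Complex.I) - ((U 0 1) * ((starRingEnd ℂ) (U 1 0)) * (-Complex.I) + (U 1 1) * ((starRingEnd ℂ) (U 0 0)) * Complex.I))/2 := by linear_combination Complex.I * (h201 - h210)/2 + Λ 2 2 * Complex.I_sq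
  have e23 : Λ 2 3 = ((U 0 0) * ((starRingEnd ℂ) (U 1 0)) * (-Complex.I) + (U 1 0) * ((starRingEnd ℂ) (U 0 0)) * Complex.I - ((U 0 1) * ((starRingEnd ℂ) (U 1 1)) * (-Complex.I) + (U 1 1) * ((starRingEnd ℂ) (U 0 1)) * Complex.I))/2 := by linear_combination (h200 - h211)/2
  have e30 : Λ 3 0 = ((U 0 0) * ((starRingEnd ℂ) (U 0 0)) * 1 + (U 1 0) * ((starRingEnd ℂ) (U 1 0)) * -1 + ((U 0 1) * ((starRingEnd ℂ) (U 0 1)) * 1 + (U 1 1) * ((starRingEnd ℂ) (U 1 1)) * -1))/2 := by linear_combination (h300 + h311)/2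
  have e31 : Λ 3 1 = ((U 0 0) * ((starRingEnd ℂ) (U 0 1)) * 1 + (U 1 0) * ((starRingEnd ℂ) (U 1 1)) * -1 + ((U 0 1) * ((starRingEnd ℂ) (U 0 0)) * 1 + (U 1 1) * ((starRingEnd ℂ) (U 1 0)) * -1))/2 := by linear_combination (h301 + h310)/2
  have e32 : Λ 3 2 = Complex.I * (((U 0 0) * ((starRingEnd ℂ) (U 0 1)) * 1 + (U 1 0) * ((starRingEnd ℂ) (U 1 1)) * -1) - ((U 0 1) * ((starRingEnd ℂ) (U 0 0)) * 1 + (U 1 1) * ((starRingEnd ℂ) (U 1 0)) * -1))/2 := by linear_combination Complex.I * (h301 - h310)/2 + Λ 3 2 * Complex.I_sq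
  have e33 : Λ 3 3 = ((U 0 0) * ((starRingEnd ℂ) (U 0 0)) * 1 + (U 1 0) * ((starRingEnd ℂ) (U 1 0)) * -1 - ((U 0 1) * ((starRingEnd ℂ) (U 0 1)) * 1 + (U 1 1) * ((starRingEnd ℂ) (U 1 1)) * -1))/2 := by linear_combination (h300 - h311)/2
  rw [detFour' Λ, Matrix.det_fin_two U, map_sub, _root_.map_mul, _root_.map_mul]
  rw [e00, e01, e02, e03, e10, e11, e12, e13, e20, e21, e22, e23, e30, e31, e32, e33]
  ring_nf
  rw [Complex.I_sq]
  ring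
end
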